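/- Let 2 < p < ∞ and let a, b be real numbers. Then |a+b|^p ≤ |a|^p + p·|a|^{p-1}·sgn(a)·b + A·|b|^p + Σ_{i=2}^{E(p)} (p choose i)·|a|^{p-i}·|b|^i, where E(p) is the largest natural number strictly less than p, (p choose i) denotes the generalized binomial coefficient p(p-1)⋯(p-i+1)/i!, and A is a positive constant depending only on p. -/

import Mathlib

open Real Finset


noncomputable def binC (q : ℝ) (i : ℕ) : ℝ :=
  (∏ j ∈ Finset.range i, (q - j)) / (Nat.factorial i)

lemma binC_zero (q : ℝ) : binC q 0 = 1 := by simp [binC]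

lemma binC_one (q : ℝ) : binC q 1 = q := by simp [binC]

lemma binC_succ (q : ℝ) (i : ℕ) : ((i : ℝ) + 1) * binC q (i + 1) = q * binC (q - 1) i := by
  have h1 : ∏ j ∈ Finset.range (i + 1), (q - j) =
      (∏ j ∈ Finset.range i, (q - 1 - j)) * q := by
    rw [Finset.prod_range_succ']
    congr 1
    · exact Finset.prod_congr rfl fun j _ => by push_cast; ring
    · simp
  have hf : (Nat.factorial i : ℝ) ≠ 0 := by positivity
  simp only [binC, Nat.factorial_succ, h1]
  push_cast
  field_simp

noncomputable def tay (q : ℝ) (n : ℕ) (x : ℝ) : ℝ :=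
  ∑ i ∈ Finset.range (n + 1), binC q i * x ^ i

lemma tay_at_zero (q : ℝ) (n : ℕ) : tay q n 0 = 1 := by
  rw [tay, Finset.sum_eq_single 0]
  · simp [binC_zero]
  · intro i _ hi; simp [zero_pow hi]
  · simp

lemma tay_zero (q : ℝ) (x : ℝ) : tay q 0 x = 1 := by simp [tay, binC_zero]

lemma tay_hasDerivAt (q : ℝ) (n : ℕ) (y : ℝ) :
    HasDerivAt (fun x => tay q (n + 1) x) (q * tay (q - 1) n y) y := by
  have h : HasDerivAt (fun x => tay q (n + 1) x)
      (∑ i ∈ Finset.range (n + 2), binC q i * ((i : ℝ) * y ^ (i - 1))) y := by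
    apply HasDerivAt.fun_sum
    intro i _
    exact (hasDerivAt_pow i y).const_mul (binC q i)
  convert h using 1
  rw [Finset.sum_range_succ']
  simp only [Nat.cast_zero, zero_mul, mul_zero, add_zero]
  rw [tay, Finset.mul_sum]
  apply Finset.sum_congr rfl
  intro i _
  have hb := binC_succ q i
  have h1 : i + 1 - 1 = i := rfl
  rw [h1]
  push_cast
  linear_combination (-(y ^ i)) * hb

lemma rem_hasDerivAt (q : ℝ) (n : ℕ) (y : ℝ) (hy : 0 < 1 + y) :
    HasDerivAt (fun x => (1 + x) ^ q - tay q (n + 1) x)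
      (q * ((1 + y) ^ (q - 1) - tay (q - 1) n y)) y := by
  have h1 := ((hasDerivAt_id y).const_add 1).rpow_const (p := q) (Or.inl hy.ne')
  refine (h1.sub (tay_hasDerivAt q n y)).congr_deriv ?_
  simp only [id_eq]
  ring

lemma rem0_hasDerivAt (q : ℝ) (y : ℝ) (hy : 0 < 1 + y) :
    HasDerivAt (fun x => (1 + x) ^ q - tay q 0 x) (q * (1 + y) ^ (q - 1)) y := by
  have h1 := ((hasDerivAt_id y).const_add 1).rpow_const (p := q) (Or.inl hy.ne')
  simp only [tay_zero]
  refine (h1.sub_const 1).congr_deriv ?_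
  simp only [id_eq]
  ring

lemma mvt_bound {f f' : ℝ → ℝ} {x M : ℝ} (hx : |x| ≤ 1/2) (hf0 : f 0 = 0)
    (hderiv : ∀ y, |y| ≤ 1/2 → HasDerivAt f (f' y) y)
    (hM : ∀ y, |y| ≤ |x| → |f' y| ≤ M) : |f x| ≤ M * |x| := by
  rcases lt_trichotomy x 0 with hx0 | rfl | hx0
  · have habs : ∀ y ∈ Set.Icc x 0, |y| ≤ |x| := by
      intro y hy
      rw [abs_of_nonpos hy.2, abs_of_nonpos hx0.le]
      linarith [hy.1]
    obtain ⟨c, hc, hfc⟩ := exists_hasDerivAt_eq_slope f f' hx0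
      (fun y hy => (hderiv y ((habs y hy).trans hx)).continuousAt.continuousWithinAt)
      (fun y hy => hderiv y ((habs y (Set.Ioo_subset_Icc_self hy)).trans hx))
    rw [hf0] at hfc
    have hxne : x ≠ 0 := hx0.ne
    have hfx : f x = f' c * x := by
      rw [hfc]; field_simp; ring
    rw [hfx, abs_mul]
    exact mul_le_mul_of_nonneg_right
      (hM c (habs c ⟨hc.1.le, hc.2.le⟩)) (abs_nonneg x)
  · simpa [hf0] using mul_nonneg (le_trans (abs_nonneg _) (hM 0 (by simp))) le_rfl
  · have habs : ∀ y ∈ Set.Icc 0 x, |y| ≤ |x| := by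
      intro y hy
      rw [abs_of_nonneg hy.1, abs_of_nonneg hx0.le]
      exact hy.2
    obtain ⟨c, hc, hfc⟩ := exists_hasDerivAt_eq_slope f f' hx0
      (fun y hy => (hderiv y ((habs y hy).trans hx)).continuousAt.continuousWithinAt)
      (fun y hy => hderiv y ((habs y (Set.Ioo_subset_Icc_self hy)).trans hx))
    rw [hf0] at hfc
    have hxne : x ≠ 0 := hx0.ne'
    have hfx : f x = f' c * x := by
      rw [hfc]; field_simp; ring
    rw [hfx, abs_mul]
    exact mul_le_mul_of_nonneg_right
      (hM c (habs c ⟨hc.1.le, hc.2.le⟩)) (abs_nonneg x)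

lemma one_add_bdd {y q : ℝ} (hy : |y| ≤ 1/2) :
    (1 + y) ^ q ≤ (1/2 : ℝ) ^ q + (2 : ℝ) ^ q := by
  have h1 : (1/2 : ℝ) ≤ 1 + y := by
    have := abs_le.mp hy; linarith [this.1]
  have h2 : (1 + y : ℝ) ≤ 2 := by
    have := abs_le.mp hy; linarith [this.2]
  rcases le_or_gt 0 q with hq | hq
  · have := Real.rpow_le_rpow (by linarith) h2 hq
    have h3 : (0:ℝ) ≤ (1/2 : ℝ) ^ q := Real.rpow_nonneg (by norm_num) q
    linarith
  · have := Real.rpow_le_rpow_of_nonpos (by norm_num) h1 hq.le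
    have h3 : (0:ℝ) ≤ (2 : ℝ) ^ q := Real.rpow_nonneg (by norm_num) q
    linarith

lemma taylor_bound (n : ℕ) : ∀ q : ℝ, ∃ K, 0 ≤ K ∧
    ∀ x : ℝ, |x| ≤ 1/2 → |(1 + x) ^ q - tay q n x| ≤ K * |x| ^ (n + 1) := by
  induction n with
  | zero =>
    intro q
    refine ⟨|q| * ((1/2 : ℝ) ^ (q - 1) + (2 : ℝ) ^ (q - 1)), by positivity, ?_⟩
    intro x hx
    have h := mvt_bound (f := fun x => (1 + x) ^ q - tay q 0 x)
      (f' := fun y => q * (1 + y) ^ (q - 1)) (M := |q| * ((1/2 : ℝ) ^ (q - 1) + (2 : ℝ) ^ (q - 1)))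
      hx (by simp [tay_zero]) ?_ ?_
    · simpa using h
    · intro y hy
      exact rem0_hasDerivAt q y (by have := abs_le.mp hy; linarith [this.1])
    · intro y hy
      have hy2 : |y| ≤ 1/2 := hy.trans hx
      rw [abs_mul]
      apply mul_le_mul_of_nonneg_left _ (abs_nonneg q)
      rw [abs_of_nonneg (Real.rpow_nonneg (by have := abs_le.mp hy2; linarith [this.1]) _)]
      exact one_add_bdd hy2
  | succ n ih =>
    intro q
    obtain ⟨K, hK, hKb⟩ := ih (q - 1)
    refine ⟨|q| * K, by positivity, ?_⟩
    intro x hx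
    have h := mvt_bound (f := fun x => (1 + x) ^ q - tay q (n + 1) x)
      (f' := fun y => q * ((1 + y) ^ (q - 1) - tay (q - 1) n y))
      (M := |q| * K * |x| ^ (n + 1)) hx (by simp [tay_at_zero]) ?_ ?_
    · calc |(1 + x) ^ q - tay q (n + 1) x| ≤ |q| * K * |x| ^ (n + 1) * |x| := h
        _ = |q| * K * |x| ^ (n + 1 + 1) := by ring
    · intro y hy
      exact rem_hasDerivAt q n y (by have := abs_le.mp hy; linarith [this.1])
    · intro y hy
      have hy2 : |y| ≤ 1/2 := hy.trans hx
      rw [abs_mul]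
      calc |q| * |(1 + y) ^ (q - 1) - tay (q - 1) n y| ≤ |q| * (K * |y| ^ (n + 1)) :=
            mul_le_mul_of_nonneg_left (hKb y hy2) (abs_nonneg q)
        _ ≤ |q| * K * |x| ^ (n + 1) := by
            rw [mul_assoc]
            exact mul_le_mul_of_nonneg_left
              (mul_le_mul_of_nonneg_left (pow_le_pow_left₀ (abs_nonneg y) hy _) hK)
              (abs_nonneg q)
section facts
variable {p : ℝ} (hp : 2 < p)

include hp

lemma hE2 : 2 ≤ ⌈p⌉₊ - 1 := by
  have : 2 < ⌈p⌉₊ := Nat.lt_ceil.mpr (by exact_mod_cast hp)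
  omega

lemma hpE1 : p ≤ ((⌈p⌉₊ - 1 : ℕ) : ℝ) + 1 := by
  have h3 : 2 < ⌈p⌉₊ := Nat.lt_ceil.mpr (by exact_mod_cast hp)
  have := Nat.le_ceil p
  have hc : ((⌈p⌉₊ - 1 : ℕ) : ℝ) = (⌈p⌉₊ : ℝ) - 1 := by
    have : (1:ℕ) ≤ ⌈p⌉₊ := by omega
    push_cast [Nat.cast_sub this]
    ring
  rw [hc]; linarith

lemma hEltp : ((⌈p⌉₊ - 1 : ℕ) : ℝ) < p := by
  have h3 : 2 < ⌈p⌉₊ := Nat.lt_ceil.mpr (by exact_mod_cast hp)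
  have h := Nat.ceil_lt_add_one (by linarith : (0:ℝ) ≤ p)
  have hc : ((⌈p⌉₊ - 1 : ℕ) : ℝ) = (⌈p⌉₊ : ℝ) - 1 := by
    have : (1:ℕ) ≤ ⌈p⌉₊ := by omega
    push_cast [Nat.cast_sub this]
    ring
  rw [hc]; linarith

lemma binC_nonneg {i : ℕ} (hi : i ≤ ⌈p⌉₊ - 1) : 0 ≤ binC p i := by
  have hE := hEltp hp
  apply div_nonneg _ (by positivity)
  apply Finset.prod_nonneg
  intro j hj
  have hj' : (j : ℝ) < i := by exact_mod_cast Finset.mem_range.mp hj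
  have hi' : (i : ℝ) ≤ ((⌈p⌉₊ - 1 : ℕ) : ℝ) := by exact_mod_cast hi
  linarith

end facts

lemma tay_split {p : ℝ} (hp : 2 < p) (x : ℝ) :
    tay p (⌈p⌉₊ - 1) x = 1 + p * x + ∑ i ∈ Finset.Icc 2 (⌈p⌉₊ - 1), binC p i * x ^ i := by
  have h2 := hE2 hp
  rw [tay, Finset.range_eq_Ico,
    ← Finset.sum_Ico_consecutive _ (by omega : 0 ≤ 2) (by omega : 2 ≤ ⌈p⌉₊ - 1 + 1),
    show Finset.Ico 2 (⌈p⌉₊ - 1 + 1) = Finset.Icc 2 (⌈p⌉₊ - 1) from (by rw [Finset.Ico_add_one_right_eq_Icc])]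
  have : ∑ i ∈ Finset.Ico 0 2, binC p i * x ^ i = 1 + p * x := by
    rw [← Finset.range_eq_Ico]
    simp [Finset.sum_range_succ, binC_zero, binC_one]
  rw [this]

lemma core_ineq {p : ℝ} (hp : 2 < p) {K A : ℝ} (hK : 0 ≤ K) (hKA : K ≤ A)
    (hKb : ∀ x : ℝ, |x| ≤ 1/2 → |(1 + x) ^ p - tay p (⌈p⌉₊ - 1) x| ≤ K * |x| ^ (⌈p⌉₊ - 1 + 1))
    {x : ℝ} (hx : |x| ≤ 1/2) :
    (1 + x) ^ p ≤ 1 + p * x + (∑ i ∈ Finset.Icc 2 (⌈p⌉₊ - 1), binC p i * |x| ^ i) + A * |x| ^ p := by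
  have h1 := abs_le.mp (hKb x hx)
  rw [tay_split hp] at h1
  have hsum : ∑ i ∈ Finset.Icc 2 (⌈p⌉₊ - 1), binC p i * x ^ i ≤
      ∑ i ∈ Finset.Icc 2 (⌈p⌉₊ - 1), binC p i * |x| ^ i := by
    apply Finset.sum_le_sum
    intro i hi
    have hb := binC_nonneg hp (Finset.mem_Icc.mp hi).2
    have : x ^ i ≤ |x| ^ i := by
      calc x ^ i ≤ |x ^ i| := le_abs_self _
        _ = |x| ^ i := abs_pow x i
    exact mul_le_mul_of_nonneg_left this hb
  have hrem : K * |x| ^ (⌈p⌉₊ - 1 + 1) ≤ A * |x| ^ p := by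
    rcases eq_or_ne x 0 with rfl | hx0
    · simp only [abs_zero]
      rw [zero_pow (by omega), Real.zero_rpow (by linarith : p ≠ 0)]
      simp
    · have hax : 0 < |x| := abs_pos.mpr hx0
      have : (|x| : ℝ) ^ (⌈p⌉₊ - 1 + 1 : ℕ) ≤ |x| ^ p := by
        rw [← Real.rpow_natCast |x| (⌈p⌉₊ - 1 + 1)]
        have heq : ((⌈p⌉₊ - 1 + 1 : ℕ) : ℝ) = p + (((⌈p⌉₊ - 1 + 1 : ℕ) : ℝ) - p) := by ring
        rw [heq, Real.rpow_add hax]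
        have h1le : |x| ^ (((⌈p⌉₊ - 1 + 1 : ℕ) : ℝ) - p) ≤ 1 := by
          apply Real.rpow_le_one (abs_nonneg x) (by linarith)
          have := hpE1 hp
          push_cast
          push_cast at this
          linarith
        nlinarith [Real.rpow_nonneg (abs_nonneg x) p]
      have hxp : (0:ℝ) ≤ |x| ^ p := Real.rpow_nonneg (abs_nonneg x) p
      nlinarith
  linarith [h1.2]
lemma pos_case {p A : ℝ} (hp : 2 < p) (hA : 0 ≤ A)
    (hcore : ∀ x : ℝ, |x| ≤ 1/2 →
      (1 + x) ^ p ≤ 1 + p * x + (∑ i ∈ Finset.Icc 2 (⌈p⌉₊ - 1), binC p i * |x| ^ i) + A * |x| ^ p)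
    {a b : ℝ} (ha : 0 < a) (hb : |b| ≤ a / 2) :
    |a + b| ^ p ≤ |a| ^ p + p * |a| ^ (p - 1) * Real.sign a * b + A * |b| ^ p +
      ∑ i ∈ Finset.Icc 2 (⌈p⌉₊ - 1), binC p i * |a| ^ (p - i) * |b| ^ (i : ℝ) := by
  set x := b / a with hxdef
  have ha0 : a ≠ 0 := ha.ne'
  have hxb : b = a * x := by rw [hxdef]; field_simp
  have hx : |x| ≤ 1/2 := by
    rw [hxdef, abs_div, abs_of_pos ha, div_le_iff₀ ha]
    linarith
  have h1x : 0 < 1 + x := by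
    have := abs_le.mp hx; linarith [this.1]
  have eqb : |b| = a * |x| := by rw [hxb, abs_mul, abs_of_pos ha]
  have eqLHS : |a + b| ^ p = a ^ p * (1 + x) ^ p := by
    have h : a + b = a * (1 + x) := by rw [hxb]; ring
    rw [h, abs_mul, abs_of_pos ha, abs_of_pos h1x, Real.mul_rpow ha.le h1x.le]
  have eq2 : p * |a| ^ (p - 1) * Real.sign a * b = a ^ p * (p * x) := by
    rw [Real.sign_of_pos ha, abs_of_pos ha, hxb]
    have hap : a ^ (p - 1) * a = a ^ p := by
      rw [← Real.rpow_add_one ha0 (p - 1)]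
      ring_nf
    linear_combination (p * x) * hap
  have eq3 : A * |b| ^ p = a ^ p * (A * |x| ^ p) := by
    rw [eqb, Real.mul_rpow ha.le (abs_nonneg x)]; ring
  have hsum : ∑ i ∈ Finset.Icc 2 (⌈p⌉₊ - 1), binC p i * |a| ^ (p - i) * |b| ^ (i : ℝ) =
      a ^ p * ∑ i ∈ Finset.Icc 2 (⌈p⌉₊ - 1), binC p i * |x| ^ i := by
    rw [Finset.mul_sum]
    apply Finset.sum_congr rfl
    intro i _
    rw [abs_of_pos ha, eqb, Real.mul_rpow ha.le (abs_nonneg x), Real.rpow_natCast (|x|) i]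
    have hai : a ^ (p - i) * a ^ (i : ℝ) = a ^ p := by
      rw [← Real.rpow_add ha]; ring_nf
    linear_combination binC p i * |x| ^ i * hai
  rw [eqLHS, eq2, eq3, hsum, abs_of_pos ha]
  have hstep := mul_le_mul_of_nonneg_left (hcore x hx) (Real.rpow_nonneg ha.le p)
  calc a ^ p * (1 + x) ^ p
      ≤ a ^ p * (1 + p * x + (∑ i ∈ Finset.Icc 2 (⌈p⌉₊ - 1), binC p i * |x| ^ i) + A * |x| ^ p) :=
        hstep
    _ = a ^ p + a ^ p * (p * x) + a ^ p * (A * |x| ^ p) +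
        a ^ p * ∑ i ∈ Finset.Icc 2 (⌈p⌉₊ - 1), binC p i * |x| ^ i := by ring
theorem stmt_1 (p : ℝ) (hp : 2 < p) :
    ∃ A : ℝ, 0 < A ∧ ∀ a b : ℝ,
      |a + b| ^ p ≤ |a| ^ p + p * |a| ^ (p - 1) * Real.sign a * b + A * |b| ^ p +
        ∑ i ∈ Finset.Icc 2 (⌈p⌉₊ - 1),
          ((∏ j ∈ Finset.range i, (p - j)) / (Nat.factorial i)) *
            |a| ^ (p - i) * |b| ^ (i : ℝ) := by
  have hp0 : (0:ℝ) < p := by linarith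
  obtain ⟨K, hK, hKb⟩ := taylor_bound (⌈p⌉₊ - 1) p
  have h3p : (0:ℝ) < (3:ℝ) ^ p := Real.rpow_pos_of_pos (by norm_num) p
  have h2p : (0:ℝ) < (2:ℝ) ^ (p - 1) := Real.rpow_pos_of_pos (by norm_num) _
  set A : ℝ := K + 3 ^ p + p * 2 ^ (p - 1) + 1 with hAdef
  have hApos : 0 < A := by
    have : 0 < p * 2 ^ (p - 1) := mul_pos hp0 h2p
    rw [hAdef]; linarith
  have hKA : K ≤ A := by
    have : 0 < p * 2 ^ (p - 1) := mul_pos hp0 h2p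
    rw [hAdef]; linarith
  have hcore : ∀ x : ℝ, |x| ≤ 1/2 →
      (1 + x) ^ p ≤ 1 + p * x + (∑ i ∈ Finset.Icc 2 (⌈p⌉₊ - 1), binC p i * |x| ^ i) +
        A * |x| ^ p := fun x hx => core_ineq hp hK hKA hKb hx
  refine ⟨A, hApos, ?_⟩
  intro a b
  rcases eq_or_ne b 0 with rfl | hb0
  · have hsum0 : ∑ i ∈ Finset.Icc 2 (⌈p⌉₊ - 1),
        ((∏ j ∈ Finset.range i, (p - j)) / (Nat.factorial i)) *
          |a| ^ (p - i) * |(0:ℝ)| ^ (i : ℝ) = 0 := by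
      apply Finset.sum_eq_zero
      intro i hi
      have hi2 : 2 ≤ i := (Finset.mem_Icc.mp hi).1
      have : ((i:ℕ):ℝ) ≠ 0 := Nat.cast_ne_zero.mpr (by omega)
      rw [abs_zero, Real.zero_rpow this, mul_zero]
    rw [hsum0, add_zero, abs_zero, Real.zero_rpow hp0.ne', mul_zero, mul_zero, add_zero,
      add_zero, add_zero]
  · rcases le_or_gt |b| (|a| / 2) with hnear | hfar
    · -- |b| ≤ |a|/2, so a ≠ 0
      have ha0 : a ≠ 0 := by
        intro h
        rw [h, abs_zero] at hnear
        exact hb0 (abs_eq_zero.mp (le_antisymm (by linarith) (abs_nonneg b)))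
      rcases lt_or_gt_of_ne ha0 with haneg | hapos
      · have h := pos_case hp hApos.le hcore (a := -a) (b := -b)
          (by linarith) (by rw [abs_neg]; rw [abs_of_neg haneg] at hnear; linarith)
        have e1 : -a + -b = -(a + b) := by ring
        rw [e1, abs_neg, abs_neg, abs_neg, Real.sign_neg] at h
        have e2 : p * |a| ^ (p - 1) * -Real.sign a * -b = p * |a| ^ (p - 1) * Real.sign a * b := by
          ring
        rw [e2] at h
        exact h
      · exact pos_case hp hApos.le hcore hapos (by rw [abs_of_pos hapos] at hnear; exact hnear)
    · -- |a| < 2|b|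
      have hb : (0:ℝ) < |b| := lt_of_le_of_lt (by positivity) hfar
      have hbne : |b| ≠ 0 := hb.ne'
      have hbp : (0:ℝ) ≤ |b| ^ p := Real.rpow_nonneg (abs_nonneg b) p
      have hL : |a + b| ^ p ≤ 3 ^ p * |b| ^ p := by
        have h1 : |a + b| ≤ 3 * |b| := by
          calc |a + b| ≤ |a| + |b| := abs_add_le a b
            _ ≤ 3 * |b| := by linarith
        calc |a + b| ^ p ≤ (3 * |b|) ^ p :=
              Real.rpow_le_rpow (abs_nonneg _) h1 hp0.le
          _ = 3 ^ p * |b| ^ p := Real.mul_rpow (by norm_num) (abs_nonneg b)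
      have hS : -(p * 2 ^ (p - 1) * |b| ^ p) ≤ p * |a| ^ (p - 1) * Real.sign a * b := by
        have h1 : |a| ^ (p - 1) ≤ 2 ^ (p - 1) * |b| ^ (p - 1) := by
          calc |a| ^ (p - 1) ≤ (2 * |b|) ^ (p - 1) :=
                Real.rpow_le_rpow (abs_nonneg a) (by linarith) (by linarith)
            _ = 2 ^ (p - 1) * |b| ^ (p - 1) := Real.mul_rpow (by norm_num) (abs_nonneg b)
        have h2 : -|b| ≤ Real.sign a * b := by
          have habs : |Real.sign a * b| ≤ |b| := by
            rw [abs_mul]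
            have hs1 : |Real.sign a| ≤ 1 := by
              rcases Real.sign_apply_eq a with h | h | h <;> simp [h]
            nlinarith [abs_nonneg b]
          linarith [neg_abs_le (Real.sign a * b)]
        have e0 : (0:ℝ) ≤ p * |a| ^ (p - 1) :=
          mul_nonneg hp0.le (Real.rpow_nonneg (abs_nonneg a) _)
        have h3 : p * |a| ^ (p - 1) * (-|b|) ≤ p * |a| ^ (p - 1) * (Real.sign a * b) :=
          mul_le_mul_of_nonneg_left h2 e0
        have hbb : |b| ^ (p - 1) * |b| = |b| ^ p := by
          rw [← Real.rpow_add_one hbne (p - 1)]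
          ring_nf
        have h4 : p * (|a| ^ (p - 1) * |b|) ≤ p * (2 ^ (p - 1) * |b| ^ (p - 1) * |b|) :=
          mul_le_mul_of_nonneg_left (mul_le_mul_of_nonneg_right h1 (abs_nonneg b)) hp0.le
        have h5 : 2 ^ (p - 1) * |b| ^ (p - 1) * |b| = 2 ^ (p - 1) * |b| ^ p := by
          rw [mul_assoc, hbb]
        rw [h5] at h4
        nlinarith [h3, h4]
      have hap : (0:ℝ) ≤ |a| ^ p := Real.rpow_nonneg (abs_nonneg a) p
      have hsum : (0:ℝ) ≤ ∑ i ∈ Finset.Icc 2 (⌈p⌉₊ - 1),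
          ((∏ j ∈ Finset.range i, (p - j)) / (Nat.factorial i)) *
            |a| ^ (p - i) * |b| ^ (i : ℝ) := by
        apply Finset.sum_nonneg
        intro i hi
        have hbn : (0:ℝ) ≤ (∏ j ∈ Finset.range i, (p - j)) / (Nat.factorial i) :=
          binC_nonneg hp (Finset.mem_Icc.mp hi).2
        have := Real.rpow_nonneg (abs_nonneg a) (p - i)
        have := Real.rpow_nonneg (abs_nonneg b) (i : ℝ)
        positivity
      have hKbp : (0:ℝ) ≤ K * |b| ^ p := mul_nonneg hK hbp
      rw [hAdef]
      nlinarith [hL, hS, hap, hsum, hbp]
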